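/- For n ≥ 5, let c be a coloring of the 2-subsets of {1,...,n} with n-3 colors such that no two disjoint sets receive the same color. For r ≥ 0, let p_r be the number of colors λ ≤ r with |c⁻¹(λ)| ≥ 4 (and hence all sets in c⁻¹(λ) share a common element), let M_r = Σ_{i=1}^{r} |c⁻¹(i)|, and N_r = p_r(n-1) - p_r(p_r-1)/2 + 3(r - p_r). Then for all 1 ≤ r ≤ n-3, M_r ≤ N_r. -/

import Mathlib

lemma pair_other {A : Finset ℕ} {x : ℕ} (h2 : A.card = 2) (hx : x ∈ A) :
    ∃ y, y ≠ x ∧ A = {x, y} := by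
  obtain ⟨u, v, huv, rfl⟩ := Finset.card_eq_two.mp h2
  rcases Finset.mem_insert.mp hx with rfl | hxv
  · exact ⟨v, fun h => huv h.symm, rfl⟩
  · have hxv' : x = v := Finset.mem_singleton.mp hxv
    refine ⟨u, fun h => huv (h.trans hxv'), ?_⟩
    rw [← hxv']
    exact Finset.pair_comm u x

lemma star_of_four (G : Finset (Finset ℕ)) (h2 : ∀ A ∈ G, A.card = 2)
    (hint : ∀ A ∈ G, ∀ B ∈ G, ¬ Disjoint A B) (h4 : 4 ≤ G.card) :
    ∃ x, ∀ A ∈ G, x ∈ A := by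
  by_contra hcon
  push_neg at hcon
  obtain ⟨A, hA⟩ := Finset.card_pos.mp (by omega : 0 < G.card)
  obtain ⟨a, b, hab, rfl⟩ := Finset.card_eq_two.mp (h2 A hA)
  obtain ⟨C, hC, haC⟩ := hcon a
  obtain ⟨D, hD, hbD⟩ := hcon b
  have hbC : b ∈ C := by
    obtain ⟨e, heC, heA⟩ := Finset.not_disjoint_iff.mp (hint C hC _ hA)
    rcases Finset.mem_insert.mp heA with rfl | he
    · exact absurd heC haC
    · rwa [Finset.mem_singleton.mp he] at heC
  have haD : a ∈ D := by
    obtain ⟨e, heD, heA⟩ := Finset.not_disjoint_iff.mp (hint D hD _ hA)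
    rcases Finset.mem_insert.mp heA with rfl | he
    · exact heD
    · rw [Finset.mem_singleton.mp he] at heD; exact absurd heD hbD
  obtain ⟨c, hcb, hCeq⟩ := pair_other (h2 C hC) hbC
  have hca : c ≠ a := by rintro rfl; apply haC; rw [hCeq]; simp
  obtain ⟨d, hda, hDeq⟩ := pair_other (h2 D hD) haD
  have hdb : d ≠ b := by rintro rfl; apply hbD; rw [hDeq]; simp
  have hcd : c = d := by
    obtain ⟨e, heC, heD⟩ := Finset.not_disjoint_iff.mp (hint C hC D hD)
    rw [hCeq] at heC; rw [hDeq] at heD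
    simp only [Finset.mem_insert, Finset.mem_singleton] at heC heD
    rcases heC with h1 | h1 <;> rcases heD with h2 | h2 <;> omega
  subst hcd
  -- C = {b, c}, D = {a, c}
  have hc3 : ({({a, b} : Finset ℕ), C, D} : Finset (Finset ℕ)).card ≤ 3 := by
    apply le_trans (Finset.card_insert_le _ _)
    have := Finset.card_insert_le C ({D} : Finset (Finset ℕ))
    simp only [Finset.card_singleton] at this ⊢
    omega
  have hEex : (G \ {({a, b} : Finset ℕ), C, D}).Nonempty := by
    rw [← Finset.card_pos]
    have := Finset.le_card_sdiff ({({a, b} : Finset ℕ), C, D}) G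
    omega
  obtain ⟨E, hE⟩ := hEex
  rw [Finset.mem_sdiff] at hE
  obtain ⟨hEG, hEne⟩ := hE
  simp only [Finset.mem_insert, Finset.mem_singleton, not_or] at hEne
  obtain ⟨hEA, hEC, hED⟩ := hEne
  by_cases hcE : c ∈ E
  · obtain ⟨e, hec, hEeq⟩ := pair_other (h2 E hEG) hcE
    obtain ⟨f, hfE, hfA⟩ := Finset.not_disjoint_iff.mp (hint E hEG _ hA)
    rw [hEeq] at hfE
    simp only [Finset.mem_insert, Finset.mem_singleton] at hfE hfA
    have hcbne : c ≠ b := by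
      rintro rfl; apply hbD; rw [hDeq]; simp
    rcases hfE with rfl | rfl
    · rcases hfA with h | h
      · exact hca h
      · exact hcbne h
    · rcases hfA with rfl | rfl
      · exact hED (by rw [hEeq, hDeq]; exact Finset.pair_comm _ _)
      · exact hEC (by rw [hEeq, hCeq]; exact Finset.pair_comm _ _)
  · have hbE : b ∈ E := by
      obtain ⟨f, hfE, hfC⟩ := Finset.not_disjoint_iff.mp (hint E hEG C hC)
      rw [hCeq] at hfC
      rcases Finset.mem_insert.mp hfC with rfl | h
      · exact hfE
      · rw [Finset.mem_singleton.mp h] at hfE; exact absurd hfE hcE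
    have haE : a ∈ E := by
      obtain ⟨f, hfE, hfD⟩ := Finset.not_disjoint_iff.mp (hint E hEG D hD)
      rw [hDeq] at hfD
      rcases Finset.mem_insert.mp hfD with rfl | h
      · exact hfE
      · rw [Finset.mem_singleton.mp h] at hfE; exact absurd hfE hcE
    apply hEA
    have hsub : ({a, b} : Finset ℕ) ⊆ E := by
      intro z hz
      rcases Finset.mem_insert.mp hz with rfl | h
      · exact haE
      · rw [Finset.mem_singleton.mp h]; exact hbE
    have hcard2 : ({a, b} : Finset ℕ).card = 2 := Finset.card_pair hab
    exact (Finset.eq_of_subset_of_card_le hsub (by rw [hcard2, h2 E hEG])).symm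

lemma meet_card (n : ℕ) : ∀ X : Finset ℕ, X ⊆ Finset.Icc 1 n →
    2 * (((Finset.Icc 1 n).powerset.filter
        (fun A => A.card = 2 ∧ ¬ Disjoint A X)).card) + X.card * (X.card - 1)
      ≤ 2 * (X.card * (n - 1)) := by
  intro X
  induction X using Finset.induction_on with
  | empty => intro _; simp
  | @insert x X hx ih =>
    intro hins
    have hXs : X ⊆ Finset.Icc 1 n := (Finset.subset_insert x X).trans hins
    have ihX := ih hXs
    set T := (Finset.Icc 1 n).powerset.filter
        (fun A => A.card = 2 ∧ ¬ Disjoint A X) with hT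
    set T' := (Finset.Icc 1 n).powerset.filter
        (fun A => A.card = 2 ∧ ¬ Disjoint A (insert x X)) with hT'
    have hsub : T' \ T ⊆ (Finset.Icc 1 n \ insert x X).image
        (fun y => ({x, y} : Finset ℕ)) := by
      intro A hA
      rw [Finset.mem_sdiff] at hA
      obtain ⟨hA1, hA2⟩ := hA
      rw [hT', Finset.mem_filter, Finset.mem_powerset] at hA1
      obtain ⟨hAsub, hAcard, hAmeet⟩ := hA1
      have hdisj : Disjoint A X := by
        by_contra hd
        apply hA2
        rw [hT, Finset.mem_filter, Finset.mem_powerset]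
        exact ⟨hAsub, hAcard, hd⟩
      have hxA : x ∈ A := by
        obtain ⟨e, heA, heX⟩ := Finset.not_disjoint_iff.mp hAmeet
        rcases Finset.mem_insert.mp heX with rfl | heX'
        · exact heA
        · exact absurd heX' (Finset.disjoint_left.mp hdisj heA)
      obtain ⟨y, hyx, hAeq⟩ := pair_other hAcard hxA
      refine Finset.mem_image.mpr ⟨y, ?_, hAeq.symm⟩
      rw [Finset.mem_sdiff]
      constructor
      · exact hAsub (by rw [hAeq]; simp)
      · intro hy
        rcases Finset.mem_insert.mp hy with rfl | hyX
        · exact hyx rfl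
        · exact Finset.disjoint_left.mp hdisj (by rw [hAeq]; simp) hyX
    have h2 : (T' \ T).card ≤ (Finset.Icc 1 n \ insert x X).card :=
      le_trans (Finset.card_le_card hsub) Finset.card_image_le
    have h3 : (Finset.Icc 1 n \ insert x X).card = n - (X.card + 1) := by
      rw [Finset.card_sdiff_of_subset hins, Nat.card_Icc, Finset.card_insert_of_notMem hx]
      omega
    have hstep : T'.card ≤ T.card + (n - (X.card + 1)) := by
      have h1 : T' ⊆ T ∪ (T' \ T) := by
        intro A hA
        by_cases hAT : A ∈ T
        · exact Finset.mem_union_left _ hAT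
        · exact Finset.mem_union_right _ (Finset.mem_sdiff.mpr ⟨hA, hAT⟩)
      calc T'.card ≤ (T ∪ (T' \ T)).card := Finset.card_le_card h1
        _ ≤ T.card + (T' \ T).card := Finset.card_union_le _ _
        _ ≤ T.card + (n - (X.card + 1)) := by omega
    have hcard : (insert x X).card = X.card + 1 := Finset.card_insert_of_notMem hx
    rw [hcard]
    have hn1 : X.card + 1 ≤ n := by
      have := Finset.card_le_card hins
      rw [Nat.card_Icc, hcard] at this
      omega
    have e1' : ∀ q : ℕ, (q + 1) * ((q + 1) - 1) = q * (q - 1) + 2 * q := by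
      intro q
      cases q with
      | zero => simp
      | succ m => simp only [Nat.add_sub_cancel]; ring
    have e1 := e1' X.card
    have e2 : (X.card + 1) * (n - 1) = X.card * (n - 1) + (n - 1) := by ring
    rw [e1, e2]
    have hs : n - (X.card + 1) + (X.card + 1) = n := Nat.sub_add_cancel hn1
    have hs2 : (n - 1) + 1 = n := Nat.sub_add_cancel (by omega)
    linarith [ihX, hstep, hs, hs2]

lemma mono_f {q pp m : ℕ} (hqp : q ≤ pp) (hpm : pp ≤ m) :
    2 * (q * m) + pp * (pp - 1) ≤ 2 * (pp * m) + q * (q - 1) := by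
  obtain ⟨d, rfl⟩ := Nat.exists_eq_add_of_le hqp
  rcases q with _ | k
  · simp only [Nat.zero_add, Nat.zero_mul, Nat.mul_zero]
    have hd : d - 1 ≤ 2 * m := by omega
    have : d * (d - 1) ≤ d * (2 * m) := Nat.mul_le_mul_left d hd
    have h2 : d * (2 * m) = 2 * (d * m) := by ring
    omega
  · rw [show (k + 1 + d) - 1 = k + d from by omega, show (k + 1) - 1 = k from by omega]
    nlinarith [mul_le_mul_right hpm (2 * d)]

theorem counting_invariant_k2 (n : ℕ) (hn : 5 ≤ n) (c : Finset ℕ → ℕ)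
    (hc : ∀ A ⊆ Finset.Icc 1 n, A.card = 2 → c A ∈ Finset.Icc 1 (n - 3))
    (hmono : ∀ A ⊆ Finset.Icc 1 n, ∀ B ⊆ Finset.Icc 1 n,
      A.card = 2 → B.card = 2 → Disjoint A B → c A ≠ c B)
    (F : ℕ → Finset (Finset ℕ))
    (hF : ∀ l, F l = (Finset.Icc 1 n).powerset.filter (fun A => A.card = 2 ∧ c A = l))
    (p M N : ℕ → ℕ)
    (hp : ∀ r, p r = ((Finset.Icc 1 r).filter (fun l => 4 ≤ (F l).card)).card)
    (hM : ∀ r, M r = ∑ i ∈ Finset.Icc 1 r, (F i).card)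
    (hN : ∀ r, N r = p r * (n - 1) - p r * (p r - 1) / 2 + 3 * (r - p r)) :
    ∀ r, 1 ≤ r → r ≤ n - 3 → M r ≤ N r := by
  classical
  intro r hr1 hr2
  set Bg := (Finset.Icc 1 r).filter (fun l => 4 ≤ (F l).card) with hBgdef
  have hmem : ∀ l, ∀ A ∈ F l, A ⊆ Finset.Icc 1 n ∧ A.card = 2 ∧ c A = l := by
    intro l A hA
    rw [hF l, Finset.mem_filter, Finset.mem_powerset] at hA
    exact ⟨hA.1, hA.2.1, hA.2.2⟩
  have hstar : ∀ l ∈ Bg, ∃ x, ∀ A ∈ F l, x ∈ A := by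
    intro l hl
    have h4 : 4 ≤ (F l).card := (Finset.mem_filter.mp hl).2
    apply star_of_four
    · intro A hA; exact (hmem l A hA).2.1
    · intro A hA B hB hd
      by_cases hAB : A = B
      · subst hAB
        rw [disjoint_self, Finset.bot_eq_empty] at hd
        have := (hmem l A hA).2.1
        rw [hd] at this
        simp at this
      · exact hmono A (hmem l A hA).1 B (hmem l B hB).1 (hmem l A hA).2.1
          (hmem l B hB).2.1 hd
          (((hmem l A hA).2.2).trans ((hmem l B hB).2.2).symm) |>.elim
    · exact h4
  let ctr : ℕ → ℕ := fun l => if h : ∃ x, ∀ A ∈ F l, x ∈ A then h.choose else 0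
  have hctr : ∀ l ∈ Bg, ∀ A ∈ F l, ctr l ∈ A := by
    intro l hl A hA
    have h := hstar l hl
    simp only [ctr, dif_pos h]
    exact h.choose_spec A hA
  set X := Bg.image ctr with hXdef
  have hXs : X ⊆ Finset.Icc 1 n := by
    intro x hxX
    obtain ⟨l, hl, rfl⟩ := Finset.mem_image.mp hxX
    have h4 : 4 ≤ (F l).card := (Finset.mem_filter.mp hl).2
    obtain ⟨A, hA⟩ := Finset.card_pos.mp (by omega : 0 < (F l).card)
    exact (hmem l A hA).1 (hctr l hl A hA)
  have hdisj : ∀ l ∈ Bg, ∀ l' ∈ Bg, l ≠ l' → Disjoint (F l) (F l') := by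
    intro l _ l' _ hne
    rw [Finset.disjoint_left]
    intro A hA hA'
    exact hne (((hmem l A hA).2.2).symm.trans ((hmem l' A hA').2.2))
  have hBU : (Bg.biUnion F).card = ∑ l ∈ Bg, (F l).card := Finset.card_biUnion hdisj
  have hsubT : Bg.biUnion F ⊆ (Finset.Icc 1 n).powerset.filter
      (fun A => A.card = 2 ∧ ¬ Disjoint A X) := by
    intro A hA
    obtain ⟨l, hl, hAl⟩ := Finset.mem_biUnion.mp hA
    obtain ⟨h1, h2c, _⟩ := hmem l A hAl
    refine Finset.mem_filter.mpr ⟨Finset.mem_powerset.mpr h1, h2c, ?_⟩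
    exact Finset.not_disjoint_iff.mpr ⟨ctr l, hctr l hl A hAl,
      Finset.mem_image_of_mem _ hl⟩
  have hT := meet_card n X hXs
  have hq : X.card ≤ Bg.card := Finset.card_image_le
  have hBsum : ∑ l ∈ Bg, (F l).card ≤ ((Finset.Icc 1 n).powerset.filter
      (fun A => A.card = 2 ∧ ¬ Disjoint A X)).card := by
    rw [← hBU]; exact Finset.card_le_card hsubT
  have hBr : Bg.card ≤ r := by
    rw [hBgdef]
    have := Finset.card_filter_le (Finset.Icc 1 r) (fun l => 4 ≤ (F l).card)
    rw [Nat.card_Icc] at this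
    omega
  have hpm : Bg.card ≤ n - 1 := by omega
  have hmono2 := mono_f hq hpm
  have key : 2 * (∑ l ∈ Bg, (F l).card) + Bg.card * (Bg.card - 1)
      ≤ 2 * (Bg.card * (n - 1)) := by linarith [hT, hBsum, hmono2]
  have hsmall : ∑ l ∈ Finset.Icc 1 r \ Bg, (F l).card ≤ 3 * (r - Bg.card) := by
    have h1 : ∀ l ∈ Finset.Icc 1 r \ Bg, (F l).card ≤ 3 := by
      intro l hl
      rw [Finset.mem_sdiff] at hl
      by_contra hcc
      exact hl.2 (Finset.mem_filter.mpr ⟨hl.1, by omega⟩)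
    have h2 : (Finset.Icc 1 r \ Bg).card = r - Bg.card := by
      rw [hBgdef, Finset.card_sdiff_of_subset (Finset.filter_subset _ _), Nat.card_Icc]
      omega
    calc ∑ l ∈ Finset.Icc 1 r \ Bg, (F l).card
        ≤ ∑ _l ∈ Finset.Icc 1 r \ Bg, 3 := Finset.sum_le_sum h1
      _ = (Finset.Icc 1 r \ Bg).card * 3 := by rw [Finset.sum_const, smul_eq_mul]
      _ = 3 * (r - Bg.card) := by rw [h2]; ring
  have hMsplit : M r = ∑ l ∈ Finset.Icc 1 r \ Bg, (F l).card
      + ∑ l ∈ Bg, (F l).card := by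
    rw [hM r, ← Finset.sum_sdiff (Finset.filter_subset (fun l => 4 ≤ (F l).card)
      (Finset.Icc 1 r))]
  have heven : Bg.card * (Bg.card - 1) / 2 * 2 = Bg.card * (Bg.card - 1) := by
    apply Nat.div_mul_cancel
    have hev' : ∀ q : ℕ, Even (q * (q - 1)) := by
      intro q
      cases q with
      | zero => simp
      | succ m =>
        rw [Nat.add_sub_cancel, mul_comm]
        exact Nat.even_mul_succ_self m
    exact (hev' Bg.card).two_dvd
  rw [hN r, hp r, ← hBgdef]
  set S1 := ∑ l ∈ Bg, (F l).card with hS1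
  set S2 := ∑ l ∈ Finset.Icc 1 r \ Bg, (F l).card with hS2
  set m0 := M r with hm0
  set a := Bg.card * (n - 1) with ha
  set b := Bg.card * (Bg.card - 1) with hb
  set q1 := Bg.card with hq1
  omega
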